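/- arXiv:0709.0213 — 4 statements merged into one kernel-verified Lean document; each statement's English description precedes it below -/
import Mathlib

section
/- For the function f_a(x) = exp(-|x|^a / 2) on ℝ², with a > 0, the Dirichlet integral satisfies ∫_{ℝ²} |∇f_a(x)|² dx = (π/2)·a. In particular, ∫_{ℝ²} |∇f_a|² dx → 0 as a → 0+. -/
open MeasureTheory Filter Real

noncomputable abbrev E2 := EuclideanSpace ℝ (Fin 2)

lemma hasGradientAt_fa {a : ℝ} (ha : 0 < a) {x : E2} (hx : x ≠ 0) :
    HasGradientAt (fun y : E2 => Real.exp (-‖y‖ ^ a / 2))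
      ((-(a / 2) * ‖x‖ ^ (a - 2) * Real.exp (-‖x‖ ^ a / 2)) • x) x := by
  have hxn : (0 : ℝ) < ‖x‖ := norm_pos_iff.mpr hx
  have ht0 : (0 : ℝ) < ‖x‖ ^ 2 := by positivity
  -- derivative of t ↦ exp (-(t ^ (a/2)) / 2) at t0 = ‖x‖^2
  have hrpow : HasDerivAt (fun t : ℝ => t ^ (a / 2))
      ((a / 2) * (‖x‖ ^ 2) ^ (a / 2 - 1)) (‖x‖ ^ 2) :=
    Real.hasDerivAt_rpow_const (Or.inl ht0.ne')
  have hφ : HasDerivAt (fun t : ℝ => Real.exp (-t ^ (a / 2) / 2))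
      (Real.exp (-(‖x‖ ^ 2) ^ (a / 2) / 2) * (-((a / 2) * (‖x‖ ^ 2) ^ (a / 2 - 1)) / 2))
      (‖x‖ ^ 2) := ((hrpow.neg).div_const 2).exp
  have hq : HasFDerivAt (fun y : E2 => ‖y‖ ^ 2) (2 • (innerSL ℝ x)) x :=
    (hasStrictFDerivAt_norm_sq x).hasFDerivAt
  have hcomp := hφ.comp_hasFDerivAt x hq
  have hfun : (fun y : E2 => Real.exp (-(‖y‖ ^ 2 : ℝ) ^ (a / 2) / 2))
      = fun y : E2 => Real.exp (-‖y‖ ^ a / 2) := by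
    funext y
    congr 2
    rw [← Real.rpow_natCast ‖y‖ 2, ← Real.rpow_mul (norm_nonneg y)]
    norm_num
    ring_nf
  simp only [Function.comp_def] at hcomp
  rw [hfun] at hcomp
  have := hasFDerivAt_iff_hasGradientAt.mp hcomp
  convert this using 1
  have hdual : (InnerProductSpace.toDual ℝ E2).symm (innerSL ℝ x) = x := by
    have h : innerSL ℝ x = InnerProductSpace.toDual ℝ E2 x := rfl
    rw [h, LinearIsometryEquiv.symm_apply_apply]
  rw [_root_.map_smul, map_nsmul, hdual]
  match_scalars
  have h1 : ((‖x‖ ^ 2 : ℝ)) ^ (a / 2) = ‖x‖ ^ a := by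
    rw [← Real.rpow_natCast ‖x‖ 2, ← Real.rpow_mul (norm_nonneg x)]
    norm_num
    ring_nf
  have h2 : ((‖x‖ ^ 2 : ℝ)) ^ (a / 2 - 1) = ‖x‖ ^ (a - 2) := by
    rw [← Real.rpow_natCast ‖x‖ 2, ← Real.rpow_mul (norm_nonneg x)]
    ring_nf
  rw [h1, h2]
  ring

lemma norm_grad_fa {a : ℝ} (ha : 0 < a) {x : E2} (hx : x ≠ 0) :
    ‖gradient (fun y : E2 => Real.exp (-‖y‖ ^ a / 2)) x‖ ^ 2
      = (a / 2) ^ 2 * ‖x‖ ^ (2 * a - 2) * Real.exp (-‖x‖ ^ a) := by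
  rw [(hasGradientAt_fa ha hx).gradient, norm_smul, Real.norm_eq_abs, mul_pow, sq_abs]
  have hxn : (0 : ℝ) < ‖x‖ := norm_pos_iff.mpr hx
  have e1 : (Real.exp (-‖x‖ ^ a / 2)) ^ 2 = Real.exp (-‖x‖ ^ a) := by
    rw [sq, ← Real.exp_add]; ring_nf
  have e2 : (‖x‖ ^ (a - 2)) ^ (2 : ℕ) * ‖x‖ ^ (2 : ℕ) = ‖x‖ ^ (2 * a - 2) := by
    rw [← Real.rpow_natCast (‖x‖ ^ (a - 2)) 2, ← Real.rpow_natCast ‖x‖ 2,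
      ← Real.rpow_mul hxn.le, ← Real.rpow_add hxn]
    norm_num
    congr 1
    ring
  calc (-(a / 2) * ‖x‖ ^ (a - 2) * Real.exp (-‖x‖ ^ a / 2)) ^ 2 * ‖x‖ ^ 2
      = (a / 2) ^ 2 * ((‖x‖ ^ (a - 2)) ^ (2:ℕ) * ‖x‖ ^ (2:ℕ)) * (Real.exp (-‖x‖ ^ a / 2)) ^ 2 := by
        ring
    _ = _ := by rw [e1, e2]

lemma integral_fa {a : ℝ} (ha : 0 < a) :
    ∫ x : E2, ‖gradient (fun y : E2 => Real.exp (-‖y‖ ^ a / 2)) x‖ ^ 2 = (π / 2) * a := by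
  set g : ℝ → ℝ := fun r => (a / 2) ^ 2 * r ^ (2 * a - 2) * Real.exp (-r ^ a) with hg
  have h0 : ∀ᵐ (x : E2), x ≠ 0 := by
    rw [MeasureTheory.ae_iff]
    simpa using measure_singleton (0 : E2)
  have hcongr : ∫ x : E2, ‖gradient (fun y : E2 => Real.exp (-‖y‖ ^ a / 2)) x‖ ^ 2
      = ∫ x : E2, g ‖x‖ := by
    refine integral_congr_ae ?_
    filter_upwards [h0] with x hx
    exact norm_grad_fa ha hx
  rw [hcongr, integral_fun_norm_addHaar volume g]
  have hdim : Module.finrank ℝ E2 = 2 := finrank_euclideanSpace_fin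
  rw [hdim]
  have hball : (volume (Metric.ball (0 : E2) 1)).toReal = π := by
    rw [EuclideanSpace.volume_ball, Fintype.card_fin]
    norm_num [Real.sq_sqrt Real.pi_nonneg, Real.Gamma_two,
      ENNReal.toReal_ofReal Real.pi_nonneg]
  have hrad : ∫ y in Set.Ioi (0:ℝ), y ^ (2 - 1) • g y = (a / 2) ^ 2 * (1 / a) := by
    have hpt : ∀ y ∈ Set.Ioi (0:ℝ),
        y ^ (2 - 1) • g y = (a / 2) ^ 2 * (y ^ (2 * a - 1) * Real.exp (-y ^ a)) := by
      intro y hy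
      have hy' : (0:ℝ) < y := hy
      simp only [hg, smul_eq_mul, pow_one]
      rw [show (2 * a - 1 : ℝ) = 1 + (2 * a - 2) by ring, Real.rpow_add hy', Real.rpow_one]
      ring
    rw [setIntegral_congr_fun measurableSet_Ioi hpt, integral_const_mul,
      integral_rpow_mul_exp_neg_rpow ha (by linarith),
      show (2 * a - 1 + 1) / a = 2 by field_simp; ring, Real.Gamma_two]
    ring
  rw [measureReal_def, hball, hrad, nsmul_eq_mul, smul_eq_mul]
  field_simp
  ring


/-- For `f_a(x) = exp(-|x|^a / 2)` on `ℝ²`, the Dirichlet integral is `(π/2)·a`,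
and in particular it tends to `0` as `a → 0+`. -/
theorem dirichlet_integral_of_f_a :
    (∀ a : ℝ, 0 < a →
      ∫ x : EuclideanSpace ℝ (Fin 2),
        ‖gradient (fun y : EuclideanSpace ℝ (Fin 2) => Real.exp (-‖y‖ ^ a / 2)) x‖ ^ 2
      = (π / 2) * a) ∧
    Tendsto (fun a : ℝ =>
      ∫ x : EuclideanSpace ℝ (Fin 2),
        ‖gradient (fun y : EuclideanSpace ℝ (Fin 2) => Real.exp (-‖y‖ ^ a / 2)) x‖ ^ 2)
      (nhdsWithin 0 (Set.Ioi 0)) (nhds 0) := by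

  refine ⟨fun a ha => integral_fa ha, ?_⟩
  have h1 : Tendsto (fun a : ℝ => (π / 2) * a) (nhdsWithin 0 (Set.Ioi 0)) (nhds 0) := by
    have h : Continuous (fun a : ℝ => (π / 2) * a) := continuous_const.mul continuous_id
    have := h.tendsto (0 : ℝ)
    simpa using this.mono_left nhdsWithin_le_nhds
  exact h1.congr' (Filter.eventually_of_mem self_mem_nhdsWithin
    fun a ha => (integral_fa ha).symm)
end

section
/- Let γ : [0,1] → ℝ² be a regular C¹ curve (γ' continuous and nonvanishing) whose image is not contained in any straight line. Then the difference set X = {γ(t) - γ(s) : s, t ∈ [0,1]} has nonempty interior in ℝ². -/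
open Set Topology Filter

/-- If two vectors in the plane have nonzero determinant, they span the plane. -/
lemma solve2 (p q y : EuclideanSpace ℝ (Fin 2))
    (hd : p 0 * q 1 - p 1 * q 0 ≠ 0) : ∃ a b : ℝ, a • p + b • q = y := by
  refine ⟨(y 0 * q 1 - y 1 * q 0) / (p 0 * q 1 - p 1 * q 0),
    (p 0 * y 1 - p 1 * y 0) / (p 0 * q 1 - p 1 * q 0), ?_⟩
  have hd' : q 1 * p 0 - q 0 * p 1 ≠ 0 := by rwa [mul_comm (q 1), mul_comm (q 0)]
  ext i
  fin_cases i <;>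
  · simp only [PiLp.add_apply, PiLp.smul_apply, smul_eq_mul, Fin.zero_eta, Fin.mk_one, Fin.isValue]
    field_simp
    ring

/-- If the determinant of `x` and `w` vanishes and `w ≠ 0`, then `x` is a multiple of `w`. -/
lemma para2 (w x : EuclideanSpace ℝ (Fin 2)) (hw : w ≠ 0)
    (h : x 0 * w 1 - x 1 * w 0 = 0) : ∃ c : ℝ, x = c • w := by
  have hw' : w 0 ≠ 0 ∨ w 1 ≠ 0 := by
    by_contra hcon
    push_neg at hcon
    apply hw
    ext i
    fin_cases i <;> simp [hcon.1, hcon.2]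
  rcases hw' with h0 | h1
  · refine ⟨x 0 / w 0, ?_⟩
    ext i
    fin_cases i <;> simp only [PiLp.smul_apply, smul_eq_mul, Fin.zero_eta, Fin.mk_one, Fin.isValue] <;> field_simp <;> nlinarith [h]
  · refine ⟨x 1 / w 1, ?_⟩
    ext i
    fin_cases i <;> simp only [PiLp.smul_apply, smul_eq_mul, Fin.zero_eta, Fin.mk_one, Fin.isValue] <;> field_simp <;> nlinarith [h]

/-- A function continuous on `[0,1]` vanishing on `(0,1)` vanishes on `[0,1]`. -/
lemma ext0 {f : ℝ → ℝ} (hf : ContinuousOn f (Icc 0 1))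
    (h : ∀ x ∈ Ioo (0:ℝ) 1, f x = 0) : ∀ x ∈ Icc (0:ℝ) 1, f x = 0 := by
  intro x hx
  have hxc : x ∈ closure (Ioo (0:ℝ) 1) := by
    rw [closure_Ioo (by norm_num : (0:ℝ) ≠ 1)]; exact hx
  have hne : (𝓝[Ioo (0:ℝ) 1] x).NeBot := mem_closure_iff_nhdsWithin_neBot.mp hxc
  have h1 : Filter.Tendsto f (𝓝[Ioo (0:ℝ) 1] x) (𝓝 (f x)) :=
    (hf x hx).mono_left (nhdsWithin_mono x Ioo_subset_Icc_self)
  have h2 : Filter.Tendsto f (𝓝[Ioo (0:ℝ) 1] x) (𝓝 0) := by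
    refine Filter.Tendsto.congr' ?_ tendsto_const_nhds
    filter_upwards [self_mem_nhdsWithin] with y hy
    exact (h y hy).symm
  exact tendsto_nhds_unique h1 h2

/-- The difference set of a regular `C¹` arc in the plane which is not contained
in a straight line has nonempty interior. -/
theorem difference_set_of_arc_has_interior_point
    (γ : ℝ → EuclideanSpace ℝ (Fin 2))
    (hγ : ContDiffOn ℝ 1 γ (Icc 0 1))
    (hreg : ∀ t ∈ Icc (0:ℝ) 1, derivWithin γ (Icc 0 1) t ≠ 0)
    (hline : ¬ ∃ (v w : EuclideanSpace ℝ (Fin 2)),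
      ∀ t ∈ Icc (0:ℝ) 1, ∃ c : ℝ, γ t = v + c • w) :
    (interior {x : EuclideanSpace ℝ (Fin 2) |
      ∃ s ∈ Icc (0:ℝ) 1, ∃ t ∈ Icc (0:ℝ) 1, x = γ t - γ s}).Nonempty := by
  set g := derivWithin γ (Icc 0 1) with hgdef
  have hud : UniqueDiffOn ℝ (Icc (0:ℝ) 1) := uniqueDiffOn_Icc zero_lt_one
  have hgc : ContinuousOn g (Icc 0 1) := hγ.continuousOn_derivWithin hud le_rfl
  have hdiff : DifferentiableOn ℝ γ (Icc 0 1) := hγ.differentiableOn one_ne_zero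
  have hder : ∀ t ∈ Icc (0:ℝ) 1, HasDerivWithinAt γ (g t) (Icc 0 1) t :=
    fun t ht => (hdiff t ht).hasDerivWithinAt
  by_cases hcase : ∃ s ∈ Ioo (0:ℝ) 1, ∃ t ∈ Ioo (0:ℝ) 1,
      g s 0 * g t 1 - g s 1 * g t 0 ≠ 0
  · -- Case A : two interior points with independent derivatives; inverse function theorem.
    obtain ⟨s₀, hs₀, t₀, ht₀, hD⟩ := hcase
    have hs₀n : Icc (0:ℝ) 1 ∈ 𝓝 s₀ := Icc_mem_nhds hs₀.1 hs₀.2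
    have ht₀n : Icc (0:ℝ) 1 ∈ 𝓝 t₀ := Icc_mem_nhds ht₀.1 ht₀.2
    have hγs : HasStrictDerivAt γ (g s₀) s₀ := by
      have := (hγ.contDiffAt hs₀n).hasStrictDerivAt one_ne_zero
      rwa [hgdef, derivWithin_of_mem_nhds hs₀n]
    have hγt : HasStrictDerivAt γ (g t₀) t₀ := by
      have := (hγ.contDiffAt ht₀n).hasStrictDerivAt one_ne_zero
      rwa [hgdef, derivWithin_of_mem_nhds ht₀n]
    set F : ℝ × ℝ → EuclideanSpace ℝ (Fin 2) := fun p => γ p.2 - γ p.1 with hFdef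
    set L : ℝ × ℝ →L[ℝ] EuclideanSpace ℝ (Fin 2) :=
      ((1 : ℝ →L[ℝ] ℝ).smulRight (g t₀)).comp (ContinuousLinearMap.snd ℝ ℝ ℝ) -
      ((1 : ℝ →L[ℝ] ℝ).smulRight (g s₀)).comp (ContinuousLinearMap.fst ℝ ℝ ℝ) with hLdef
    have hF : HasStrictFDerivAt F L (s₀, t₀) := by
      have h2 : HasStrictFDerivAt (fun p : ℝ × ℝ => γ p.2)
          (((1 : ℝ →L[ℝ] ℝ).smulRight (g t₀)).comp (ContinuousLinearMap.snd ℝ ℝ ℝ))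
          (s₀, t₀) := hγt.hasStrictFDerivAt.comp (s₀, t₀) hasStrictFDerivAt_snd
      have h1 : HasStrictFDerivAt (fun p : ℝ × ℝ => γ p.1)
          (((1 : ℝ →L[ℝ] ℝ).smulRight (g s₀)).comp (ContinuousLinearMap.fst ℝ ℝ ℝ))
          (s₀, t₀) := hγs.hasStrictFDerivAt.comp (s₀, t₀) hasStrictFDerivAt_fst
      exact h2.sub h1
    have hsurj : LinearMap.range L.toLinearMap = ⊤ := by
      rw [LinearMap.range_eq_top]
      intro y
      obtain ⟨a, b, hab⟩ := solve2 (g s₀) (g t₀) y hD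
      refine ⟨(-a, b), ?_⟩
      simp only [ContinuousLinearMap.coe_coe, hLdef, ContinuousLinearMap.coe_sub', Pi.sub_apply,
        ContinuousLinearMap.coe_comp', Function.comp_apply,
        ContinuousLinearMap.coe_fst', ContinuousLinearMap.coe_snd',
        ContinuousLinearMap.smulRight_apply, ContinuousLinearMap.one_apply,
        neg_smul]
      rw [← hab]
      abel
    have hmap := hF.map_nhds_eq_of_surj hsurj
    refine ⟨F (s₀, t₀), mem_interior_iff_mem_nhds.mpr ?_⟩
    rw [← hmap, Filter.mem_map]
    have hprod : Ioo (0:ℝ) 1 ×ˢ Ioo (0:ℝ) 1 ∈ 𝓝 (s₀, t₀) :=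
      prod_mem_nhds (Ioo_mem_nhds hs₀.1 hs₀.2) (Ioo_mem_nhds ht₀.1 ht₀.2)
    filter_upwards [hprod] with p hp
    exact ⟨p.1, Ioo_subset_Icc_self hp.1, p.2, Ioo_subset_Icc_self hp.2, rfl⟩
  · -- Case B : all derivatives parallel, so γ lies on a line — contradiction.
    exfalso
    push_neg at hcase
    -- extend to all of Icc × Icc by continuity
    have h1 : ∀ t ∈ Icc (0:ℝ) 1, ∀ s ∈ Icc (0:ℝ) 1,
        g s 0 * g t 1 - g s 1 * g t 0 = 0 := by
      have step1 : ∀ t ∈ Ioo (0:ℝ) 1, ∀ s ∈ Icc (0:ℝ) 1,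
          g s 0 * g t 1 - g s 1 * g t 0 = 0 := by
        intro t ht
        refine ext0 ?_ (fun s hs => hcase s hs t ht)
        exact (((EuclideanSpace.proj (0 : Fin 2)).continuous.comp_continuousOn hgc).mul
            continuousOn_const).sub
          (((EuclideanSpace.proj (1 : Fin 2)).continuous.comp_continuousOn hgc).mul
            continuousOn_const)
      intro t ht s hs
      have : ∀ t' ∈ Icc (0:ℝ) 1, g s 0 * g t' 1 - g s 1 * g t' 0 = 0 := by
        refine ext0 ?_ (fun t' ht' => step1 t' ht' s hs)
        exact (continuousOn_const.mul
            ((EuclideanSpace.proj (1 : Fin 2)).continuous.comp_continuousOn hgc)).sub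
          (continuousOn_const.mul
            ((EuclideanSpace.proj (0 : Fin 2)).continuous.comp_continuousOn hgc))
      exact this t ht
    have h0mem : (0:ℝ) ∈ Icc (0:ℝ) 1 := ⟨le_rfl, zero_le_one⟩
    set w : EuclideanSpace ℝ (Fin 2) := g 0 with hwdef
    have hw : w ≠ 0 := hreg 0 h0mem
    set h : ℝ → ℝ := fun t => γ t 0 * w 1 - γ t 1 * w 0 with hhdef
    have hh : ∀ t ∈ Icc (0:ℝ) 1,
        HasDerivWithinAt h (g t 0 * w 1 - g t 1 * w 0) (Icc 0 1) t := by
      intro t ht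
      have h0 : HasDerivWithinAt (fun t => γ t 0) (g t 0) (Icc 0 1) t := by
        have := (EuclideanSpace.proj (0 : Fin 2)).hasFDerivAt.comp_hasDerivWithinAt t
          (hder t ht)
        simp at this; exact this
      have h1' : HasDerivWithinAt (fun t => γ t 1) (g t 1) (Icc 0 1) t := by
        have := (EuclideanSpace.proj (1 : Fin 2)).hasFDerivAt.comp_hasDerivWithinAt t
          (hder t ht)
        simp at this; exact this
      exact (h0.mul_const _).sub (h1'.mul_const _)
    have hdiffh : DifferentiableOn ℝ h (Icc 0 1) :=
      fun t ht => (hh t ht).differentiableWithinAt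
    have hzero : ∀ t ∈ Ico (0:ℝ) 1, derivWithin h (Icc 0 1) t = 0 := by
      intro t ht
      have ht' : t ∈ Icc (0:ℝ) 1 := Ico_subset_Icc_self ht
      rw [(hh t ht').derivWithin (hud t ht')]
      exact h1 0 h0mem t ht'
    have hconst := constant_of_derivWithin_zero hdiffh hzero
    apply hline
    refine ⟨γ 0, w, fun t ht => ?_⟩
    have hdet : (γ t - γ 0) 0 * w 1 - (γ t - γ 0) 1 * w 0 = 0 := by
      have := hconst t ht
      simp only [hhdef] at this
      simp only [PiLp.sub_apply]
      nlinarith [this]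
    obtain ⟨c, hc⟩ := para2 w (γ t - γ 0) hw hdet
    exact ⟨c, by rw [← hc]; abel⟩
end

section
/- Let ν be a negative finite Borel measure on ℝ² whose support has positive Lebesgue measure, and let p₁,…,p_N ∈ ℝ² be pairwise distinct. Then the matrix (ν̂(p_j - p_k))_{j,k=1}^N is negative definite: Σ_{j,k} ξ̄_j ξ_k ν̂(p_j - p_k) < 0 for all nonzero ξ ∈ ℂ^N. -/
open MeasureTheory Real Complex
open scoped RealInnerProductSpace


lemma oneD' {M : ℕ} (b : Fin M → ℝ) (hb : Function.Injective b)
    (c : Fin M → ℂ) (j₀ : Fin M) (hc : c j₀ ≠ 0) :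
    volume {t : ℝ | ∑ j, c j * Complex.exp (Complex.I * (b j) * (t : ℂ)) = 0} = 0 := by
  set h : ℝ → ℂ := fun t => ∑ j, c j * Complex.exp (Complex.I * (b j) * (t : ℂ)) with hh
  -- analyticity
  have hdiff : Differentiable ℂ (fun z : ℂ => ∑ j, c j * Complex.exp (Complex.I * (b j) * z)) := by
    apply Differentiable.fun_sum
    intro j _
    apply Differentiable.const_mul
    apply Complex.differentiable_exp.comp
    exact (differentiable_const _).mul differentiable_id
  have hHC : AnalyticOnNhd ℂ (fun z : ℂ => ∑ j, c j * Complex.exp (Complex.I * (b j) * z)) Set.univ :=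
    hdiff.differentiableOn.analyticOnNhd isOpen_univ
  have hHR := hHC.restrictScalars (𝕜 := ℝ)
  have hofReal : AnalyticOnNhd ℝ (fun t : ℝ => (t : ℂ)) Set.univ :=
    Complex.ofRealCLM.analyticOnNhd _
  have hA : AnalyticOnNhd ℝ h Set.univ := by
    have := hHR.comp hofReal (Set.mapsTo_univ _ _)
    exact this
  -- not identically zero
  have ht₀ : ∃ t : ℝ, h t ≠ 0 := by
    by_contra hcon
    push_neg at hcon
    set χ : Fin M → (Multiplicative ℝ →* ℂ) := fun j =>
      { toFun := fun t => Complex.exp (Complex.I * (b j) * ((Multiplicative.toAdd t : ℝ) : ℂ))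
        map_one' := by simp
        map_mul' := fun s t => by
          simp [← Complex.exp_add]
          ring_nf } with hχ
    have hinj : Function.Injective χ := by
      intro j k hjk
      by_contra hne
      have hbne : b j ≠ b k := fun hbe => hne (hb hbe)
      set d : ℝ := b j - b k with hd
      have hdne : d ≠ 0 := sub_ne_zero.mpr hbne
      have := congrArg (fun f : Multiplicative ℝ →* ℂ => f (Multiplicative.ofAdd (π / d))) hjk
      simp only [hχ, MonoidHom.coe_mk, OneHom.coe_mk, toAdd_ofAdd] at this
      have h2 : Complex.exp (Complex.I * (b j) * ((π / d : ℝ) : ℂ) - Complex.I * (b k) * ((π / d : ℝ) : ℂ)) = 1 := by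
        rw [Complex.exp_sub, this, div_self (Complex.exp_ne_zero _)]
      have h3 : Complex.I * (b j) * ((π / d : ℝ) : ℂ) - Complex.I * (b k) * ((π / d : ℝ) : ℂ) = π * Complex.I := by
        have hdc : ((d : ℝ) : ℂ) ≠ 0 := Complex.ofReal_ne_zero.mpr hdne
        have e1 : Complex.I * (b j) * ((π / d : ℝ) : ℂ) - Complex.I * (b k) * ((π / d : ℝ) : ℂ)
            = Complex.I * ((d : ℝ) : ℂ) * ((π / d : ℝ) : ℂ) := by
          rw [hd]; push_cast; ring
        rw [e1]
        push_cast at hdc ⊢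
        field_simp
      rw [h3, Complex.exp_pi_mul_I] at h2
      norm_num at h2
    have hli : LinearIndependent ℂ (fun j => ⇑(χ j)) :=
      (linearIndependent_monoidHom (Multiplicative ℝ) ℂ).comp χ hinj
    have hzero : ∑ j, c j • ⇑(χ j) = 0 := by
      funext t
      have := hcon (Multiplicative.toAdd t)
      simpa [hχ, hh, Finset.sum_apply] using this
    have := Fintype.linearIndependent_iff.mp hli c (by exact hzero) j₀
    exact hc this
  obtain ⟨t₀, ht₀⟩ := ht₀
  -- isolated zeros
  have hiso : ∀ z ∈ {t : ℝ | h t = 0}, ∀ᶠ y in nhdsWithin z {z}ᶜ, h y ≠ 0 := by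
    intro z hz
    rcases (hA z (Set.mem_univ z)).eventually_eq_zero_or_eventually_ne_zero with h1 | h2
    · exfalso
      have := hA.eqOn_zero_of_preconnected_of_eventuallyEq_zero isPreconnected_univ (Set.mem_univ z) h1
      exact ht₀ (this (Set.mem_univ t₀))
    · exact h2
  -- countable
  have hcount : Set.Countable {t : ℝ | h t = 0} := by
    set Z := {t : ℝ | h t = 0} with hZ
    have hdisc : DiscreteTopology Z := by
      rw [discreteTopology_subtype_iff]
      intro z hz
      rw [← Filter.empty_mem_iff_bot]
      have hmem : {y : ℝ | h y ≠ 0} ∈ nhdsWithin z {z}ᶜ := hiso z hz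
      have hint := Filter.inter_mem_inf hmem (Filter.mem_principal_self Z)
      have heq : {y : ℝ | h y ≠ 0} ∩ Z = ∅ := by
        ext y; simp only [Set.mem_inter_iff, Set.mem_empty_iff_false, iff_false, not_and, hZ,
          Set.mem_setOf_eq]
        exact fun hy hz2 => hy hz2
      rwa [heq] at hint
    have : Countable Z := TopologicalSpace.separableSpace_iff_countable.mp inferInstance
    exact Set.countable_coe_iff.mp this
  exact hcount.measure_zero _

lemma twoD' {N : ℕ} (p : Fin N → EuclideanSpace ℝ (Fin 2)) (hp : Function.Injective p)
    (ξ : Fin N → ℂ) (j₀ : Fin N) (hξ : ξ j₀ ≠ 0) :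
    volume {x : EuclideanSpace ℝ (Fin 2) |
      ∑ j, ξ j * Complex.exp (Complex.I * ((⟪p j, x⟫ : ℝ) : ℂ)) = 0} = 0 := by
  -- find a direction with pairwise distinct frequencies
  obtain ⟨v, hv0, hvinj⟩ : ∃ v : EuclideanSpace ℝ (Fin 2), v ≠ 0 ∧
      Function.Injective (fun j => (⟪p j, v⟫ : ℝ)) := by
    set B : Set (EuclideanSpace ℝ (Fin 2)) := (⋃ (j : Fin N), ⋃ (k : Fin N), ⋃ (_ : j ≠ k),
        ((LinearMap.ker (innerSL ℝ (p j - p k) : EuclideanSpace ℝ (Fin 2) →ₗ[ℝ] ℝ) : Submodule ℝ (EuclideanSpace ℝ (Fin 2))) :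
          Set (EuclideanSpace ℝ (Fin 2)))) ∪ {0} with hB
    have hBnull : volume B = 0 := by
      apply measure_union_null
      · apply measure_iUnion_null; intro j
        apply measure_iUnion_null; intro k
        apply measure_iUnion_null; intro hjk
        apply Measure.addHaar_submodule
        intro htop
        have hmem : p j - p k ∈ LinearMap.ker (innerSL ℝ (p j - p k) : EuclideanSpace ℝ (Fin 2) →ₗ[ℝ] ℝ) := by
          rw [htop]; trivial
        rw [LinearMap.mem_ker] at hmem
        simp only [ContinuousLinearMap.coe_coe, innerSL_apply_apply] at hmem
        rw [inner_self_eq_zero, sub_eq_zero] at hmem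
        exact hjk (hp hmem)
      · exact measure_singleton 0
    have hBne : B ≠ Set.univ := by
      intro h
      have : volume (Set.univ : Set (EuclideanSpace ℝ (Fin 2))) ≠ 0 :=
        (isOpen_univ.measure_pos volume ⟨0, trivial⟩).ne'
      rw [← h] at this; exact this hBnull
    obtain ⟨v, hv⟩ := Set.ne_univ_iff_exists_notMem B |>.mp hBne
    rw [hB, Set.mem_union, Set.mem_iUnion] at hv
    push_neg at hv
    obtain ⟨hv1, hv2⟩ := hv
    refine ⟨v, by simpa using hv2, ?_⟩
    intro j k hjk
    by_contra hne
    have h1 : ⟪p j - p k, v⟫ = 0 := by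
      rw [inner_sub_left]
      exact sub_eq_zero.mpr (by simpa using hjk)
    simp only [Set.mem_iUnion, not_exists] at hv1
    exact hv1 j k hne (by
      simp only [SetLike.mem_coe, LinearMap.mem_ker, ContinuousLinearMap.coe_coe, innerSL_apply_apply]
      exact h1)
  -- normalize
  set w : EuclideanSpace ℝ (Fin 2) := ‖v‖⁻¹ • v with hw
  have hnv : ‖v‖ ≠ 0 := norm_ne_zero_iff.mpr hv0
  have hwnorm : ‖w‖ = 1 := by
    rw [hw, norm_smul]
    simp [_root_.abs_of_nonneg (inv_nonneg.mpr (norm_nonneg v)), inv_mul_cancel₀ hnv]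
  have hwinj : Function.Injective (fun j => (⟪p j, w⟫ : ℝ)) := by
    intro j k hjk
    simp only [hw, real_inner_smul_right] at hjk
    exact hvinj (mul_left_cancel₀ (inv_ne_zero hnv) hjk)
  -- orthonormal basis (u, w)
  set u : EuclideanSpace ℝ (Fin 2) :=
    WithLp.toLp 2 ![-(w 1), w 0] with hu
  have hu0 : u 0 = -(w 1) := rfl
  have hu1 : u 1 = w 0 := rfl
  have hww : w 0 * w 0 + w 1 * w 1 = 1 := by
    have h1 : (⟪w, w⟫ : ℝ) = 1 := by
      rw [real_inner_self_eq_norm_sq, hwnorm]; norm_num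
    rw [PiLp.inner_apply] at h1
    simpa [Fin.sum_univ_two, RCLike.inner_apply, pow_two] using h1
  have hw2 : (⟪w, w⟫ : ℝ) = 1 := by
    rw [real_inner_self_eq_norm_sq, hwnorm]; norm_num
  have huu : (⟪u, u⟫ : ℝ) = 1 := by
    rw [PiLp.inner_apply]
    simp only [Fin.sum_univ_two, RCLike.inner_apply, conj_trivial, hu0, hu1]
    ring_nf
    ring_nf at hww
    linarith [hww]
  have huw : (⟪u, w⟫ : ℝ) = 0 := by
    rw [PiLp.inner_apply]
    simp only [Fin.sum_univ_two, RCLike.inner_apply, conj_trivial, hu0, hu1]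
    ring
  have hwu : (⟪w, u⟫ : ℝ) = 0 := by rw [real_inner_comm]; exact huw
  set W : Fin 2 → EuclideanSpace ℝ (Fin 2) := ![u, w] with hW
  have hon : Orthonormal ℝ W := by
    rw [orthonormal_iff_ite]
    intro i j
    fin_cases i <;> fin_cases j <;>
      simp [hW, huu, huw, hwu, hw2, hwnorm,
        (by have := real_inner_self_eq_norm_sq u; nlinarith [norm_nonneg u] : ‖u‖ = 1)]
  have hcard : Fintype.card (Fin 2) = Module.finrank ℝ (EuclideanSpace ℝ (Fin 2)) := by
    simp [finrank_euclideanSpace_fin]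
  have hspan : ⊤ ≤ Submodule.span ℝ (Set.range W) := by
    rw [← coe_basisOfLinearIndependentOfCardEqFinrank hon.linearIndependent hcard]
    rw [(basisOfLinearIndependentOfCardEqFinrank hon.linearIndependent hcard).span_eq]
  set B2 : OrthonormalBasis (Fin 2) ℝ (EuclideanSpace ℝ (Fin 2)) :=
    OrthonormalBasis.mk hon hspan with hB2
  have hB2coe : ∀ i, B2 i = W i := fun i => by rw [hB2, OrthonormalBasis.coe_mk]
  -- transport the measure
  set Z : Set (EuclideanSpace ℝ (Fin 2)) := {x : EuclideanSpace ℝ (Fin 2) |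
      ∑ j, ξ j * Complex.exp (Complex.I * ((⟪p j, x⟫ : ℝ) : ℂ)) = 0} with hZ
  have hfcont : Continuous fun x : EuclideanSpace ℝ (Fin 2) =>
      ∑ j, ξ j * Complex.exp (Complex.I * ((⟪p j, x⟫ : ℝ) : ℂ)) := by
    apply continuous_finset_sum
    intro j _
    exact continuous_const.mul (Complex.continuous_exp.comp
      (continuous_const.mul (Complex.continuous_ofReal.comp
        (Continuous.inner continuous_const continuous_id))))
  have hZclosed : IsClosed Z := isClosed_eq hfcont continuous_const
  set Φ : ℝ × ℝ → EuclideanSpace ℝ (Fin 2) := fun q => q.1 • u + q.2 • w with hΦdef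
  have hΦcont : Continuous Φ :=
    (continuous_fst.smul continuous_const).add (continuous_snd.smul continuous_const)
  have hΦmp : MeasurePreserving Φ volume volume := by
    have h1 := B2.measurePreserving_repr_symm
    have h2 := PiLp.volume_preserving_toLp (Fin 2)
    have h3 := (volume_preserving_finTwoArrow ℝ).symm MeasurableEquiv.finTwoArrow
    have hcomp := (h1.comp h2).comp h3
    have heq : Φ = (⇑B2.repr.symm ∘ (WithLp.toLp 2 : (Fin 2 → ℝ) → EuclideanSpace ℝ (Fin 2))) ∘
        ⇑(MeasurableEquiv.finTwoArrow (α := ℝ)).symm := by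
      funext q
      show Φ q = B2.repr.symm ((WithLp.toLp 2 : (Fin 2 → ℝ) → EuclideanSpace ℝ (Fin 2))
        (MeasurableEquiv.finTwoArrow.symm q))
      rw [← B2.sum_repr_symm]
      rw [Fin.sum_univ_two]
      simp only [hB2coe]
      show Φ q = (Fin.cons q.1 (Fin.cons q.2 finZeroElim) : Fin 2 → ℝ) 0 • W 0 +
        (Fin.cons q.1 (Fin.cons q.2 finZeroElim) : Fin 2 → ℝ) 1 • W 1
      simp [hΦdef, hW]
    rw [heq]
    exact hcomp
  have hZvol : volume Z = volume (Φ ⁻¹' Z) :=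
    (hΦmp.measure_preimage hZclosed.measurableSet.nullMeasurableSet).symm
  rw [hZvol]
  -- Fubini
  have hmeas : MeasurableSet (Φ ⁻¹' Z) :=
    (hZclosed.preimage hΦcont).measurableSet
  rw [Measure.volume_eq_prod, Measure.measure_prod_null hmeas]
  apply Filter.Eventually.of_forall
  intro s
  show volume (Prod.mk s ⁻¹' (Φ ⁻¹' Z)) = 0
  have hsliceeq : (Prod.mk s ⁻¹' (Φ ⁻¹' Z)) =
      {t : ℝ | ∑ j, (ξ j * Complex.exp (Complex.I * ((s * ⟪p j, u⟫ : ℝ) : ℂ))) *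
        Complex.exp (Complex.I * ((⟪p j, w⟫ : ℝ) : ℂ) * (t : ℂ)) = 0} := by
    ext t
    simp only [Set.mem_preimage, Set.mem_setOf_eq, hZ, hΦdef]
    have hsum : ∀ j : Fin N, ξ j * Complex.exp (Complex.I * ((⟪p j, s • u + t • w⟫ : ℝ) : ℂ)) =
        (ξ j * Complex.exp (Complex.I * ((s * ⟪p j, u⟫ : ℝ) : ℂ))) *
          Complex.exp (Complex.I * ((⟪p j, w⟫ : ℝ) : ℂ) * (t : ℂ)) := by
      intro j
      rw [inner_add_right, real_inner_smul_right, real_inner_smul_right]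
      rw [mul_assoc, ← Complex.exp_add]
      congr 2
      push_cast
      ring
    rw [Finset.sum_congr rfl (fun j _ => hsum j)]
  rw [hsliceeq]
  exact oneD' (fun j => (⟪p j, w⟫ : ℝ)) hwinj _ j₀
    (mul_ne_zero hξ (Complex.exp_ne_zero _))

/-- If `ν = -μ` is a nonzero finite negative Borel measure on `ℝ²` whose topological support
has positive Lebesgue measure, then for pairwise distinct points `p₁,…,p_N`, the matrix
`(ν̂(p_j - p_k))` is negative definite. -/
theorem fourier_matrix_neg_def_of_support_pos_measure
    (μ : Measure (EuclideanSpace ℝ (Fin 2))) [IsFiniteMeasure μ] (hμ : μ ≠ 0)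
    (hsupp : 0 < volume {x : EuclideanSpace ℝ (Fin 2) | ∀ U ∈ nhds x, μ U ≠ 0})
    (hatν : EuclideanSpace ℝ (Fin 2) → ℂ)
    (hhat : ∀ p, hatν p =
      -((1 / (2 * π)) * ∫ x, Complex.exp (-(Complex.I * (⟪p, x⟫ : ℝ))) ∂μ))
    (N : ℕ) (p : Fin N → EuclideanSpace ℝ (Fin 2))
    (hp : Function.Injective p)
    (ξ : Fin N → ℂ) (hξ : ξ ≠ 0) :
    ∃ r : ℝ, r < 0 ∧
      (∑ j, ∑ k, (starRingEnd ℂ) (ξ j) * ξ k * hatν (p j - p k)) = (r : ℂ) := by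
  set g : Fin N → EuclideanSpace ℝ (Fin 2) → ℂ :=
    fun j x => ξ j * Complex.exp (Complex.I * ((⟪p j, x⟫ : ℝ) : ℂ)) with hg
  set f : EuclideanSpace ℝ (Fin 2) → ℂ := fun x => ∑ j, g j x with hf
  -- pointwise identity
  have hpt : ∀ j k x, (starRingEnd ℂ) (g j x) * g k x =
      ((starRingEnd ℂ) (ξ j) * ξ k) *
        Complex.exp (-(Complex.I * ((⟪p j - p k, x⟫ : ℝ) : ℂ))) := by
    intro j k x
    have e1 : (starRingEnd ℂ) (g j x) =
        (starRingEnd ℂ) (ξ j) * Complex.exp (-(Complex.I * ((⟪p j, x⟫ : ℝ) : ℂ))) := by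
      rw [hg]
      simp only [map_mul]
      congr 1
      rw [← Complex.exp_conj]
      congr 1
      simp only [map_mul, Complex.conj_I, Complex.conj_ofReal]
      ring
    have e2 : Complex.exp (-(Complex.I * ((⟪p j, x⟫ : ℝ) : ℂ))) *
        Complex.exp (Complex.I * ((⟪p k, x⟫ : ℝ) : ℂ)) =
        Complex.exp (-(Complex.I * ((⟪p j - p k, x⟫ : ℝ) : ℂ))) := by
      rw [← Complex.exp_add, inner_sub_left]
      congr 1
      push_cast
      ring
    calc (starRingEnd ℂ) (g j x) * g k x
        = ((starRingEnd ℂ) (ξ j) * ξ k) * (Complex.exp (-(Complex.I * ((⟪p j, x⟫ : ℝ) : ℂ))) *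
            Complex.exp (Complex.I * ((⟪p k, x⟫ : ℝ) : ℂ))) := by rw [e1, hg]; ring
      _ = ((starRingEnd ℂ) (ξ j) * ξ k) *
            Complex.exp (-(Complex.I * ((⟪p j - p k, x⟫ : ℝ) : ℂ))) := by rw [e2]
  -- continuity of g and f
  have hgcont : ∀ j, Continuous (g j) := by
    intro j
    exact continuous_const.mul (Complex.continuous_exp.comp
      (continuous_const.mul (Complex.continuous_ofReal.comp
        (Continuous.inner continuous_const continuous_id))))
  have hfcont : Continuous f := continuous_finset_sum _ fun j _ => hgcont j
  -- norms
  have hgnorm : ∀ j x, ‖g j x‖ = ‖ξ j‖ := by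
    intro j x
    rw [hg]
    simp only [norm_mul]
    have : ‖Complex.exp (Complex.I * ((⟪p j, x⟫ : ℝ) : ℂ))‖ = 1 := by
      rw [Complex.norm_exp]
      simp
    rw [this, mul_one]
  -- integrability
  have hgint : ∀ j k, Integrable (fun x => (starRingEnd ℂ) (g j x) * g k x) μ := by
    intro j k
    refine Integrable.mono' (integrable_const (‖ξ j‖ * ‖ξ k‖))
      ((Complex.continuous_conj.comp (hgcont j)).mul (hgcont k)).aestronglyMeasurable
      (Filter.Eventually.of_forall fun x => ?_)
    rw [norm_mul, RCLike.norm_conj, hgnorm, hgnorm]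
  -- term-by-term identity
  have key : ∀ j k, (starRingEnd ℂ) (ξ j) * ξ k * hatν (p j - p k) =
      -((1 / (2 * (π : ℂ))) * ∫ x, (starRingEnd ℂ) (g j x) * g k x ∂μ) := by
    intro j k
    rw [hhat]
    have h1 : ∫ x, (starRingEnd ℂ) (g j x) * g k x ∂μ =
        ((starRingEnd ℂ) (ξ j) * ξ k) *
          ∫ x, Complex.exp (-(Complex.I * ((⟪p j - p k, x⟫ : ℝ) : ℂ))) ∂μ := by
      rw [← integral_const_mul]
      exact integral_congr_ae (Filter.Eventually.of_forall fun x => hpt j k x)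
    rw [h1]
    ring
  -- the real integral
  set Iν : ℝ := ∫ x, Complex.normSq (f x) ∂μ with hIν
  have hIνnonneg : 0 ≤ Iν := integral_nonneg fun x => Complex.normSq_nonneg _
  -- the sum equals the integral expression
  have hsum : (∑ j, ∑ k, (starRingEnd ℂ) (ξ j) * ξ k * hatν (p j - p k)) =
      -((1 / (2 * (π : ℂ))) * (Iν : ℂ)) := by
    calc (∑ j, ∑ k, (starRingEnd ℂ) (ξ j) * ξ k * hatν (p j - p k))
        = ∑ j, ∑ k, -((1 / (2 * (π : ℂ))) * ∫ x, (starRingEnd ℂ) (g j x) * g k x ∂μ) :=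
          Finset.sum_congr rfl fun j _ => Finset.sum_congr rfl fun k _ => key j k
      _ = -((1 / (2 * (π : ℂ))) * ∑ j, ∑ k, ∫ x, (starRingEnd ℂ) (g j x) * g k x ∂μ) := by
          simp only [Finset.sum_neg_distrib, Finset.mul_sum]
      _ = -((1 / (2 * (π : ℂ))) * ∫ x, ∑ j, ∑ k, (starRingEnd ℂ) (g j x) * g k x ∂μ) := by
          rw [integral_finset_sum _ (fun j _ => integrable_finset_sum _ (fun k _ => hgint j k))]
          congr 2
          exact Finset.sum_congr rfl fun j _ =>
            (integral_finset_sum _ (fun k _ => hgint j k)).symm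
      _ = -((1 / (2 * (π : ℂ))) * ∫ x, ((Complex.normSq (f x) : ℝ) : ℂ) ∂μ) := by
          congr 2
          apply integral_congr_ae
          apply Filter.Eventually.of_forall
          intro x
          show (∑ j, ∑ k, (starRingEnd ℂ) (g j x) * g k x) = ((Complex.normSq (f x) : ℝ) : ℂ)
          rw [Complex.normSq_eq_conj_mul_self]
          show _ = (starRingEnd ℂ) (∑ j, g j x) * (∑ k, g k x)
          rw [map_sum, Finset.sum_mul_sum]
      _ = -((1 / (2 * (π : ℂ))) * (Iν : ℂ)) := by
          have hIR : ∫ x, ((Complex.normSq (f x) : ℝ) : ℂ) ∂μ = ((Iν : ℝ) : ℂ) := by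
            rw [hIν]; exact integral_ofReal
          rw [hIR]
  -- positivity of the integral
  have hIνpos : 0 < Iν := by
    rcases hIνnonneg.lt_or_eq with h | h
    · exact h
    exfalso
    -- Iν = 0 : f vanishes a.e.
    have hnsqint : Integrable (fun x => Complex.normSq (f x)) μ := by
      refine Integrable.mono' (integrable_const ((∑ j, ‖ξ j‖) ^ 2))
        (Complex.continuous_normSq.comp hfcont).aestronglyMeasurable
        (Filter.Eventually.of_forall fun x => ?_)
      rw [Real.norm_eq_abs, _root_.abs_of_nonneg (Complex.normSq_nonneg _), Complex.normSq_eq_norm_sq]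
      have h1 : ‖f x‖ ≤ ∑ j, ‖ξ j‖ := by
        rw [hf]
        refine (norm_sum_le _ _).trans ?_
        exact le_of_eq (Finset.sum_congr rfl fun j _ => hgnorm j x)
      exact pow_le_pow_left₀ (norm_nonneg _) h1 2
    have hae : (fun x => Complex.normSq (f x)) =ᵐ[μ] 0 :=
      (integral_eq_zero_iff_of_nonneg (fun x => Complex.normSq_nonneg _) hnsqint).mp h.symm
    have hμzero : μ {x | f x ≠ 0} = 0 := by
      have := hae
      rw [Filter.EventuallyEq, ae_iff] at this
      convert this using 2
      ext x
      simp [Complex.normSq_eq_zero]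
    -- the support is contained in the zero set of f
    have hsub : {x : EuclideanSpace ℝ (Fin 2) | ∀ U ∈ nhds x, μ U ≠ 0} ⊆ {x | f x = 0} := by
      intro x hx
      by_contra hfx
      have hopen : IsOpen {y : EuclideanSpace ℝ (Fin 2) | f y ≠ 0} :=
        (isOpen_compl_singleton).preimage hfcont
      exact hx _ (hopen.mem_nhds hfx) hμzero
    obtain ⟨j₀, hj₀⟩ := Function.ne_iff.mp hξ
    have hZnull : volume {x : EuclideanSpace ℝ (Fin 2) | f x = 0} = 0 := by
      have := twoD' p hp ξ j₀ (by simpa using hj₀)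
      convert this using 2
    have : volume {x : EuclideanSpace ℝ (Fin 2) | ∀ U ∈ nhds x, μ U ≠ 0} = 0 :=
      le_antisymm (le_trans (measure_mono hsub) hZnull.le) zero_le
    rw [this] at hsupp
    exact lt_irrefl _ hsupp
  refine ⟨-(1 / (2 * π) * Iν), ?_, ?_⟩
  · have h2π : 0 < 1 / (2 * π) := by positivity
    nlinarith
  · rw [hsum]
    push_cast
    ring
end

section
/- Let ν be a compactly supported finite negative Borel measure on ℝ² (ν ≤ 0, ν ≠ 0) such that ν̂(p) → 0 as p → ∞ along some line through the origin, and let S ⊂ ℝ² be a set whose difference set has nonempty interior. Then for every N there exist points p₁,…,p_N ∈ S such that the matrix (ν̂(p_j - p_k))_{j,k=1}^N is negative definite. -/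
open MeasureTheory Real Filter
open scoped RealInnerProductSpace ComplexOrder

namespace NDAux

abbrev P2 := EuclideanSpace ℝ (Fin 2)

noncomputable def chi (p : P2) : P2 → ℂ := fun x => Complex.exp (-(Complex.I * (⟪p, x⟫ : ℝ)))

lemma chi_cont (p : P2) : Continuous (chi p) := by
  exact Complex.continuous_exp.comp <| (continuous_const.mul <|
    Complex.continuous_ofReal.comp <| continuous_const.inner continuous_id).neg

lemma chi_norm (p : P2) (x : P2) : ‖chi p x‖ = 1 := by
  unfold chi
  rw [Complex.norm_exp]
  simp [mul_comm]

lemma chi_add (p q : P2) (x : P2) : chi p x * chi q x = chi (p + q) x := by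
  unfold chi
  rw [← Complex.exp_add, inner_add_left]
  push_cast
  ring_nf

lemma chi_conj (p : P2) (x : P2) : (starRingEnd ℂ) (chi p x) = chi (-p) x := by
  unfold chi
  rw [← Complex.exp_conj]
  simp only [map_neg, map_mul, Complex.conj_I, Complex.conj_ofReal, inner_neg_left]
  push_cast
  ring_nf

lemma chi_zero (x : P2) : chi 0 x = 1 := by
  unfold chi
  simp

variable (μ : Measure P2) [IsFiniteMeasure μ]

lemma chi_memLp (p : P2) : MemLp (chi p) 2 μ :=
  MemLp.of_bound (chi_cont p).aestronglyMeasurable 1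
    (Filter.Eventually.of_forall fun x => le_of_eq (chi_norm p x))

lemma chi_integrable (p : P2) : Integrable (chi p) μ :=
  memLp_one_iff_integrable.mp <|
    MemLp.of_bound (chi_cont p).aestronglyMeasurable 1
      (Filter.Eventually.of_forall fun x => le_of_eq (chi_norm p x))

noncomputable def FT (p : P2) : ℂ := ∫ x, chi p x ∂μ

noncomputable def EE (p : P2) : Lp ℂ 2 μ := (chi_memLp μ p).toLp (chi p)

lemma EE_coeFn (p : P2) : (EE μ p : P2 → ℂ) =ᵐ[μ] chi p := MemLp.coeFn_toLp _

lemma inner_EE (p q : P2) : (inner ℂ (EE μ p) (EE μ q) : ℂ) = FT μ (q - p) := by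
  rw [MeasureTheory.L2.inner_def]
  unfold FT
  apply integral_congr_ae
  filter_upwards [EE_coeFn μ p, EE_coeFn μ q] with x h1 h2
  rw [h1, h2, RCLike.inner_apply, chi_conj, mul_comm, chi_add, neg_add_eq_sub]

lemma FT_zero : FT μ 0 = ((μ Set.univ).toReal : ℂ) := by
  unfold FT
  simp only [chi_zero, integral_const, smul_eq_mul, mul_one, Complex.real_smul]
  rfl



section Gram
variable {H : Type*} [NormedAddCommGroup H] [InnerProductSpace ℂ H]

noncomputable def gram {n : ℕ} (v : Fin n → H) : Matrix (Fin n) (Fin n) ℂ :=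
  Matrix.of fun i j => (inner ℂ (v i) (v j) : ℂ)

lemma gram_det_ne_zero {n : ℕ} {v : Fin n → H} (hv : LinearIndependent ℂ v) :
    (gram v).det ≠ 0 := by
  intro hdet
  obtain ⟨x, hx0, hx⟩ := Matrix.exists_mulVec_eq_zero_iff.mpr hdet
  have hvy : ∀ i, (inner ℂ (v i) (∑ j, x j • v j) : ℂ) = 0 := by
    intro i
    have h := congrFun hx i
    simpa [Matrix.mulVec, dotProduct, gram, inner_sum, inner_smul_right, mul_comm]
      using h
  have hy : (∑ j, x j • v j) = 0 := by
    have h2 : (inner ℂ (∑ j, x j • v j) (∑ j, x j • v j) : ℂ) = 0 := by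
      rw [sum_inner]
      exact Finset.sum_eq_zero fun i _ => by rw [inner_smul_left, hvy i, mul_zero]
    exact inner_self_eq_zero.mp h2
  exact hx0 (funext fun i => Fintype.linearIndependent_iff.mp hv x hy i)

lemma gram_det_eq_zero {n : ℕ} {v : Fin n → H} (hv : ¬ LinearIndependent ℂ v) :
    (gram v).det = 0 := by
  obtain ⟨g, hg, i, hgi⟩ := Fintype.not_linearIndependent_iff.mp hv
  apply Matrix.exists_vecMul_eq_zero_iff.mp
  refine ⟨fun j => (starRingEnd ℂ) (g j), ?_, ?_⟩
  · intro h
    exact hgi (by simpa using congrFun h i)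
  · funext j
    have h : (inner ℂ (∑ k, g k • v k) (v j) : ℂ) = 0 := by rw [hg, inner_zero_left]
    simpa [Matrix.vecMul, dotProduct, gram, sum_inner, inner_smul_left, mul_comm] using h

lemma mem_span_iff_gram_det {m : ℕ} {g : Fin m → H} (hg : LinearIndependent ℂ g) (w : H) :
    (gram (Fin.cons w g)).det = 0 ↔ w ∈ Submodule.span ℂ (Set.range g) := by
  constructor
  · intro h
    by_contra hw
    exact gram_det_ne_zero (linearIndependent_fin_cons.mpr ⟨hg, hw⟩) h
  · intro h
    apply gram_det_eq_zero
    intro hli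
    exact (linearIndependent_fin_cons.mp hli).2 h

lemma dot_gram {n : ℕ} (v : Fin n → H) (x : Fin n → ℂ) :
    (inner ℂ (∑ k, (starRingEnd ℂ) (x k) • v k) (∑ k, (starRingEnd ℂ) (x k) • v k) : ℂ)
      = ∑ j, ∑ k, (starRingEnd ℂ) (x j) * x k * inner ℂ (v k) (v j) := by
  rw [sum_inner]
  simp only [inner_smul_left, Complex.conj_conj, inner_sum, inner_smul_right, Finset.mul_sum]
  rw [Finset.sum_comm]
  refine Finset.sum_congr rfl fun j _ => Finset.sum_congr rfl fun k _ => by ring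

end Gram

section Analytic

lemma analytic_det {n : ℕ} (f : Fin n → Fin n → ℝ → ℂ) (r₀ : ℝ)
    (hf : ∀ i j, AnalyticAt ℝ (f i j) r₀) :
    AnalyticAt ℝ (fun r => (Matrix.of fun i j => f i j r).det) r₀ := by
  simp only [Matrix.det_apply']
  apply Finset.analyticAt_fun_sum
  intro σ _
  apply AnalyticAt.mul analyticAt_const
  apply Finset.analyticAt_fun_prod
  intro i _
  exact hf (σ i) i

variable (μ : Measure P2) [IsFiniteMeasure μ]

lemma FT_line_analytic {R : ℝ} (hR : ∀ᵐ x ∂μ, ‖x‖ ≤ R) (a b : P2) (r₀ : ℝ) :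
    AnalyticAt ℝ (fun r : ℝ => FT μ (a + r • b)) r₀ := by
  set C : ℝ := ‖b‖ * max R 0 with hC
  have hCnn : 0 ≤ C := mul_nonneg (norm_nonneg _) (le_max_right _ _)
  have hbx : ∀ᵐ x ∂μ, |(⟪b, x⟫ : ℝ)| ≤ C := by
    filter_upwards [hR] with x hx
    calc |(⟪b, x⟫ : ℝ)| ≤ ‖b‖ * ‖x‖ := abs_real_inner_le_norm b x
      _ ≤ ‖b‖ * max R 0 := by
          gcongr
          exact le_trans hx (le_max_left _ _)
  set F : ℂ → P2 → ℂ :=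
    fun z x => Complex.exp (-(Complex.I * (((⟪a, x⟫ : ℝ) : ℂ) + z * ((⟪b, x⟫ : ℝ) : ℂ)))) with hF
  have hFnorm : ∀ z x, ‖F z x‖ = Real.exp (z.im * (⟪b, x⟫ : ℝ)) := by
    intro z x
    rw [hF, Complex.norm_exp]
    congr 1
    simp [Complex.mul_re, Complex.mul_im]
  have hFcont : ∀ z, Continuous (fun x => F z x) := by
    intro z
    apply Complex.continuous_exp.comp
    apply Continuous.neg
    apply continuous_const.mul
    exact (Complex.continuous_ofReal.comp (continuous_const.inner continuous_id)).add
      (continuous_const.mul (Complex.continuous_ofReal.comp (continuous_const.inner continuous_id)))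
  have hdiff : Differentiable ℂ (fun z => ∫ x, F z x ∂μ) := by
    intro z₀
    have key := hasDerivAt_integral_of_dominated_loc_of_deriv_le (μ := μ) (F := F)
      (F' := fun z x => Complex.exp (-(Complex.I * (((⟪a, x⟫ : ℝ) : ℂ) + z * ((⟪b, x⟫ : ℝ) : ℂ))))
        * (-(Complex.I * ((⟪b, x⟫ : ℝ) : ℂ))))
      (bound := fun _ => C * Real.exp ((|z₀.im| + 1) * C)) (x₀ := z₀) (Metric.ball_mem_nhds z₀ zero_lt_one)
      (Filter.Eventually.of_forall fun z => (hFcont z).aestronglyMeasurable)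
      ?_ ?_ ?_ (integrable_const _) ?_
    · exact key.2.differentiableAt
    · -- Integrable (F z₀)
      rw [← memLp_one_iff_integrable]
      apply MemLp.of_bound (hFcont z₀).aestronglyMeasurable (Real.exp (|z₀.im| * C))
      filter_upwards [hbx] with x hx
      rw [hFnorm]
      apply Real.exp_le_exp.mpr
      calc z₀.im * (⟪b, x⟫ : ℝ) ≤ |z₀.im * (⟪b, x⟫ : ℝ)| := le_abs_self _
        _ = |z₀.im| * |(⟪b, x⟫ : ℝ)| := abs_mul _ _
        _ ≤ |z₀.im| * C := by gcongr
    · -- AESM of F' z₀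
      apply Continuous.aestronglyMeasurable
      exact (hFcont z₀).mul ((continuous_const.mul
        (Complex.continuous_ofReal.comp (continuous_const.inner continuous_id))).neg)
    · -- bound on F'
      filter_upwards [hbx] with x hx
      intro z hz
      rw [norm_mul, hFnorm]
      have him : |z.im| ≤ |z₀.im| + 1 := by
        have h1 : |z.im - z₀.im| ≤ ‖z - z₀‖ := by
          simpa using Complex.abs_im_le_norm (z - z₀)
        have h2 : ‖z - z₀‖ < 1 := by
          rw [Metric.mem_ball] at hz
          simpa [Complex.dist_eq] using hz
        calc |z.im| ≤ |z₀.im| + |z.im - z₀.im| := by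
              have := abs_sub_abs_le_abs_sub z.im z₀.im
              linarith [abs_sub_comm z.im z₀.im]
          _ ≤ |z₀.im| + 1 := by linarith
      have hnrm : ‖-(Complex.I * ((⟪b, x⟫ : ℝ) : ℂ))‖ = |(⟪b, x⟫ : ℝ)| := by
        rw [norm_neg, norm_mul, Complex.norm_I, one_mul, Complex.norm_real, Real.norm_eq_abs]
      rw [hnrm, mul_comm]
      have hexp : Real.exp (z.im * (⟪b, x⟫ : ℝ)) ≤ Real.exp ((|z₀.im| + 1) * C) := by
        apply Real.exp_le_exp.mpr
        calc z.im * (⟪b, x⟫ : ℝ) ≤ |z.im * (⟪b, x⟫ : ℝ)| := le_abs_self _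
          _ = |z.im| * |(⟪b, x⟫ : ℝ)| := abs_mul _ _
          _ ≤ (|z₀.im| + 1) * C := by
              apply mul_le_mul him hx (abs_nonneg _)
              positivity
      exact mul_le_mul hx hexp (Real.exp_nonneg _) hCnn
    · -- HasDerivAt
      apply Filter.Eventually.of_forall
      intro x z _
      have h1 : HasDerivAt (fun z : ℂ => ((⟪a, x⟫ : ℝ) : ℂ) + z * ((⟪b, x⟫ : ℝ) : ℂ))
          ((⟪b, x⟫ : ℝ) : ℂ) z := (hasDerivAt_mul_const _).const_add _
      have h2 := ((h1.const_mul Complex.I).neg).cexp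
      exact h2
  have heq : (fun r : ℝ => FT μ (a + r • b)) = (fun z => ∫ x, F z x ∂μ) ∘ Complex.ofReal := by
    funext r
    simp only [Function.comp_apply, FT]
    apply integral_congr_ae
    apply Filter.Eventually.of_forall
    intro x
    unfold chi
    rw [hF]
    congr 2
    rw [inner_add_left, real_inner_smul_left]
    push_cast
    ring
  rw [heq]
  exact ((hdiff.analyticAt (r₀ : ℂ)).restrictScalars).comp (Complex.ofRealCLM.analyticAt r₀)

end Analytic

section Sums
variable (μ : Measure P2) [IsFiniteMeasure μ]

lemma coeFn_sum_smul_EE {ι : Type*} (s : Finset ι) (c : ι → ℂ) (w : ι → P2) :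
    (↑↑(∑ i ∈ s, c i • EE μ (w i)) : P2 → ℂ) =ᵐ[μ] fun x => ∑ i ∈ s, c i • chi (w i) x := by
  classical
  induction s using Finset.induction_on with
  | empty =>
      simp only [Finset.sum_empty]
      exact Lp.coeFn_zero ℂ 2 μ
  | insert a s hx ih =>
      rw [Finset.sum_insert hx]
      filter_upwards [Lp.coeFn_add (c a • EE μ (w a)) (∑ i ∈ s, c i • EE μ (w i)),
        Lp.coeFn_smul (c a) (EE μ (w a)), EE_coeFn μ (w a), ih] with x h1 h2 h3 h4
      rw [Finset.sum_insert hx, h1]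
      simp only [Pi.add_apply]
      rw [h2, h4]
      simp only [Pi.smul_apply, h3]

lemma EE_sub_eq_sum {d : ℕ} (P : Fin d → P2) (q q' : P2) (aa cc : Fin d → ℂ)
    (hq : EE μ q = ∑ i, aa i • EE μ (P i)) (hq' : EE μ q' = ∑ i, cc i • EE μ (P i)) :
    EE μ (q - q') = ∑ ij : Fin d × Fin d,
      (aa ij.1 * (starRingEnd ℂ) (cc ij.2)) • EE μ (P ij.1 - P ij.2) := by
  have h1 : chi q =ᵐ[μ] fun x => ∑ i, aa i • chi (P i) x :=
    (EE_coeFn μ q).symm.trans (by rw [hq]; exact coeFn_sum_smul_EE μ Finset.univ aa P)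
  have h2 : chi q' =ᵐ[μ] fun x => ∑ i, cc i • chi (P i) x :=
    (EE_coeFn μ q').symm.trans (by rw [hq']; exact coeFn_sum_smul_EE μ Finset.univ cc P)
  refine Lp.ext ?_
  filter_upwards [EE_coeFn μ (q - q'),
    coeFn_sum_smul_EE μ Finset.univ (fun ij : Fin d × Fin d => aa ij.1 * (starRingEnd ℂ) (cc ij.2))
      (fun ij : Fin d × Fin d => P ij.1 - P ij.2), h1, h2] with x e1 e2 e3 e4
  rw [e1, e2]
  calc chi (q - q') x = chi q x * chi (-q') x := by
        rw [chi_add, ← sub_eq_add_neg]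
    _ = chi q x * (starRingEnd ℂ) (chi q' x) := by rw [chi_conj]
    _ = (∑ i, aa i • chi (P i) x) * (starRingEnd ℂ) (∑ j, cc j • chi (P j) x) := by
        rw [e3, e4]
    _ = ∑ i, ∑ j, (aa i * (starRingEnd ℂ) (cc j)) • (chi (P i) x * chi (- P j) x) := by
        rw [map_sum, Finset.sum_mul_sum]
        refine Finset.sum_congr rfl fun i _ => Finset.sum_congr rfl fun j _ => ?_
        simp only [smul_eq_mul, map_mul, chi_conj]
        ring
    _ = ∑ ij : Fin d × Fin d, (aa ij.1 * (starRingEnd ℂ) (cc ij.2)) • chi (P ij.1 - P ij.2) x := by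
        rw [Fintype.sum_prod_type]
        refine Finset.sum_congr rfl fun i _ => Finset.sum_congr rfl fun j _ => ?_
        rw [chi_add, ← sub_eq_add_neg]

end Sums

end NDAux

set_option maxHeartbeats 2000000 in
/-- If `ν` is a nonzero compactly supported finite negative measure on `ℝ²` whose Fourier
transform decays along some line through the origin, and `S` has a difference set with
nonempty interior, then for every `N` there are points `p₁,…,p_N ∈ S` making the matrix
`(ν̂(p_j - p_k))` negative definite. -/
theorem exists_points_neg_def_matrix
    (μ : Measure (EuclideanSpace ℝ (Fin 2))) [IsFiniteMeasure μ] (hμ : μ ≠ 0)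
    (K : Set (EuclideanSpace ℝ (Fin 2))) (hK : IsCompact K) (hμK : μ Kᶜ = 0)
    (hatν : EuclideanSpace ℝ (Fin 2) → ℂ)
    (hhat : ∀ p, hatν p =
      -((1 / (2 * π)) * ∫ x, Complex.exp (-(Complex.I * (⟪p, x⟫ : ℝ))) ∂μ))
    (hdecay : ∃ v : EuclideanSpace ℝ (Fin 2), v ≠ 0 ∧
      Tendsto (fun r : ℝ => hatν (r • v)) (cocompact ℝ) (nhds 0))
    (S : Set (EuclideanSpace ℝ (Fin 2)))
    (hS : (interior {q : EuclideanSpace ℝ (Fin 2) | ∃ p ∈ S, ∃ p' ∈ S, q = p - p'}).Nonempty) :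
    ∀ N : ℕ, ∃ p : Fin N → EuclideanSpace ℝ (Fin 2), (∀ j, p j ∈ S) ∧
      (-(Matrix.of fun j k => hatν (p j - p k))).PosDef := by
  intro N
  classical
  obtain ⟨v, hv0, hvdec⟩ := hdecay
  have hμuniv : μ Set.univ ≠ 0 := fun h => hμ (Measure.measure_univ_eq_zero.mp h)
  set t₀ : ℝ := (μ Set.univ).toReal with ht₀def
  have ht₀ : 0 < t₀ := ENNReal.toReal_pos hμuniv (measure_ne_top μ _)
  have hFT0 : NDAux.FT μ 0 = (t₀ : ℂ) := NDAux.FT_zero μ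
  have hhat' : ∀ p, hatν p = -((1 / (2 * (π : ℂ))) * NDAux.FT μ p) := hhat
  have h2π : (2 * (π : ℂ)) ≠ 0 := by
    have : (π : ℂ) ≠ 0 := by exact_mod_cast Real.pi_ne_zero
    exact mul_ne_zero two_ne_zero this
  have hFTvia : ∀ p, NDAux.FT μ p = -(2 * (π : ℂ)) * hatν p := by
    intro p
    rw [hhat' p]
    field_simp
  have hFTdec : Tendsto (fun r : ℝ => NDAux.FT μ (r • v)) (cocompact ℝ) (nhds 0) := by
    have heq : (fun r : ℝ => NDAux.FT μ (r • v)) = fun r => -(2 * (π : ℂ)) * hatν (r • v) :=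
      funext fun r => hFTvia _
    rw [heq]
    simpa using hvdec.const_mul (-(2 * (π : ℂ)))
  obtain ⟨RK, hRK⟩ := hK.isBounded.exists_norm_le
  have haeK : ∀ᵐ x ∂μ, ‖x‖ ≤ RK := by
    have hae : ∀ᵐ x ∂μ, x ∈ K := by
      rw [MeasureTheory.ae_iff]
      exact hμK
    filter_upwards [hae] with x hx using hRK x hx
  -- MAIN CLAIM
  have main : ∃ p : Fin N → NDAux.P2, (∀ j, p j ∈ S) ∧
      LinearIndependent ℂ (fun j => NDAux.EE μ (p j)) := by
    by_contra hcon
    push_neg at hcon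
    obtain ⟨b, hbsub, hbspan, hbli⟩ := exists_linearIndependent ℂ (NDAux.EE μ '' S)
    have hnosub : ∀ t : Finset (Lp ℂ 2 μ), ↑t ⊆ b → t.card ≠ N := by
      intro t ht hcard
      have hmem : ∀ y : {x // x ∈ t}, ∃ pS, pS ∈ S ∧ NDAux.EE μ pS = ↑y := by
        intro y
        obtain ⟨pS, hpS, hE⟩ := hbsub (ht y.2)
        exact ⟨pS, hpS, hE⟩
      choose pf hpfS hpfE using hmem
      set e' : Fin N → {x // x ∈ t} := fun j => t.equivFin.symm (Fin.cast hcard.symm j) with he'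
      have he'inj : Function.Injective e' := by
        intro i j h
        have h2 := t.equivFin.symm.injective h
        exact Fin.ext (by simpa using congrArg Fin.val h2)
      refine hcon (fun j => pf (e' j)) (fun j => hpfS _) ?_
      have heq2 : (fun j => NDAux.EE μ (pf (e' j))) = fun j => ((e' j : Lp ℂ 2 μ)) :=
        funext fun j => hpfE _
      rw [heq2]
      exact hbli.comp (fun j => ⟨(e' j : Lp ℂ 2 μ), ht (e' j).2⟩)
        (fun i j h => he'inj (Subtype.ext (by simpa using congrArg Subtype.val h)))
    have hbfin : b.Finite := by
      by_contra hinf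
      obtain ⟨t, htsub, htcard⟩ := Set.Infinite.exists_subset_card_eq hinf N
      exact hnosub t htsub htcard
    obtain ⟨d, eb, hebrange⟩ := hbfin.fin_embedding
    have hPmem : ∀ i : Fin d, ∃ pS, pS ∈ S ∧ NDAux.EE μ pS = eb i := by
      intro i
      have hmem : eb i ∈ b := by rw [← hebrange]; exact Set.mem_range_self i
      obtain ⟨pS, hpS, hE⟩ := hbsub hmem
      exact ⟨pS, hpS, hE⟩
    choose P hPS hPE using hPmem
    have hrangeP : Set.range (fun i => NDAux.EE μ (P i)) = b := by
      rw [show (fun i => NDAux.EE μ (P i)) = ⇑eb from funext hPE, hebrange]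
    have hspanb : ∀ q, q ∈ S → ∃ aa : Fin d → ℂ,
        NDAux.EE μ q = ∑ i, aa i • NDAux.EE μ (P i) := by
      intro q hq
      have h1 : NDAux.EE μ q ∈ Submodule.span ℂ (Set.range fun i => NDAux.EE μ (P i)) := by
        rw [hrangeP, hbspan]
        exact Submodule.subset_span (Set.mem_image_of_mem _ hq)
      obtain ⟨aa, haa⟩ := (Submodule.mem_span_range_iff_exists_fun ℂ).mp h1
      exact ⟨aa, haa.symm⟩
    set Wgen : Fin d × Fin d → Lp ℂ 2 μ := fun ij => NDAux.EE μ (P ij.1 - P ij.2) with hWgenDef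
    have hdiffmem : ∀ q ∈ S, ∀ q' ∈ S,
        NDAux.EE μ (q - q') ∈ Submodule.span ℂ (Set.range Wgen) := by
      intro q hq q' hq'
      obtain ⟨aa, ha⟩ := hspanb q hq
      obtain ⟨cc, hc⟩ := hspanb q' hq'
      rw [NDAux.EE_sub_eq_sum μ P q q' aa cc ha hc]
      exact Submodule.sum_mem _ fun ij _ =>
        Submodule.smul_mem _ _ (Submodule.subset_span (Set.mem_range_self ij))
    obtain ⟨b₂, hb₂sub, hb₂span, hb₂li⟩ := exists_linearIndependent ℂ (Set.range Wgen)
    have hb₂fin : b₂.Finite := (Set.finite_range Wgen).subset hb₂sub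
    obtain ⟨m, e₂, he₂range⟩ := hb₂fin.fin_embedding
    have hQmem : ∀ a2 : Fin m, ∃ q2 : NDAux.P2, NDAux.EE μ q2 = e₂ a2 := by
      intro a2
      have hmem : e₂ a2 ∈ b₂ := by rw [← he₂range]; exact Set.mem_range_self a2
      obtain ⟨ij, hij⟩ := hb₂sub hmem
      exact ⟨P ij.1 - P ij.2, hij⟩
    choose QQ hQQ using hQmem
    have hrangeQ : Set.range (fun a2 => NDAux.EE μ (QQ a2)) = b₂ := by
      rw [show (fun a2 => NDAux.EE μ (QQ a2)) = ⇑e₂ from funext hQQ, he₂range]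
    have hQli : LinearIndependent ℂ (fun a2 => NDAux.EE μ (QQ a2)) := by
      have heq3 : (fun a2 => NDAux.EE μ (QQ a2)) = fun a2 => (e₂ a2 : Lp ℂ 2 μ) := funext hQQ
      rw [heq3]
      exact hb₂li.comp (fun a2 => ⟨e₂ a2, by rw [← he₂range]; exact Set.mem_range_self a2⟩)
        (fun i j h => e₂.injective (congrArg Subtype.val h))
    set W := Submodule.span ℂ (Set.range fun a2 => NDAux.EE μ (QQ a2)) with hWdef
    have hWeq : W = Submodule.span ℂ (Set.range Wgen) := by
      rw [hWdef, hrangeQ, hb₂span]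
    -- the analytic determinant function
    set pt : NDAux.P2 → Fin (m+1) → NDAux.P2 := fun w => Fin.cons w QQ with hptdef
    set D : NDAux.P2 → ℂ := fun w =>
      (Matrix.of fun i j : Fin (m+1) => NDAux.FT μ (pt w j - pt w i)).det with hDdef
    have hDgram : ∀ w, D w =
        (NDAux.gram (Fin.cons (NDAux.EE μ w) (fun a2 => NDAux.EE μ (QQ a2)))).det := by
      intro w
      have hc : Fin.cons (NDAux.EE μ w) (fun a2 => NDAux.EE μ (QQ a2))
          = fun i => NDAux.EE μ (pt w i) := by
        rw [show (fun a2 => NDAux.EE μ (QQ a2)) = NDAux.EE μ ∘ QQ from rfl, ← Fin.comp_cons]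
        rfl
      have hmat : (Matrix.of fun i j : Fin (m+1) => NDAux.FT μ (pt w j - pt w i))
          = NDAux.gram (Fin.cons (NDAux.EE μ w) (fun a2 => NDAux.EE μ (QQ a2))) := by
        rw [hc]
        ext i j
        simp only [NDAux.gram, Matrix.of_apply]
        rw [NDAux.inner_EE]
      calc D w = (Matrix.of fun i j : Fin (m+1) => NDAux.FT μ (pt w j - pt w i)).det := by
            rw [hDdef]
        _ = _ := by rw [hmat]
    have hDzero_iff : ∀ w, (D w = 0 ↔ NDAux.EE μ w ∈ W) := by
      intro w
      rw [hDgram w, hWdef]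
      exact NDAux.mem_span_iff_gram_det hQli (NDAux.EE μ w)
    obtain ⟨w₀, hw₀⟩ := hS
    have hDU : ∀ w ∈ interior {q : NDAux.P2 | ∃ p ∈ S, ∃ p' ∈ S, q = p - p'}, D w = 0 := by
      intro w hw
      obtain ⟨pq, hpq, pq', hpq', hweq⟩ := interior_subset hw
      rw [hDzero_iff, hWeq, hweq]
      exact hdiffmem pq hpq pq' hpq'
    have hDall : ∀ w, D w = 0 := by
      intro w
      set φ : ℝ → ℂ := fun r => D (w₀ + r • (w - w₀)) with hφdef
      have hφan : AnalyticOnNhd ℝ φ Set.univ := by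
        intro r₀ _
        have hrw : φ = fun r => (Matrix.of fun i j : Fin (m+1) =>
            NDAux.FT μ ((pt w₀ j - pt w₀ i) +
              r • ((((if j = 0 then (1:ℝ) else 0) - if i = 0 then (1:ℝ) else 0)) • (w - w₀)))).det := by
          funext r
          rw [hφdef]
          simp only [hDdef]
          congr 1
          ext i j
          have key : ∀ k : Fin (m+1), pt (w₀ + r • (w - w₀)) k
              = pt w₀ k + ((if k = 0 then (1:ℝ) else 0) * r) • (w - w₀) := by
            intro k
            refine Fin.cases ?_ ?_ k
            · simp [hptdef]
            · intro k'
              simp [hptdef, Fin.cons_succ, Fin.succ_ne_zero]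
          simp only [Matrix.of_apply]
          rw [key i, key j]
          congr 1
          module
        rw [hrw]
        apply NDAux.analytic_det
        intro i j
        exact NDAux.FT_line_analytic μ haeK _ _ r₀
      have hev : φ =ᶠ[nhds (0:ℝ)] 0 := by
        have hcont : ContinuousAt (fun r : ℝ => w₀ + r • (w - w₀)) 0 := by
          apply Continuous.continuousAt
          exact continuous_const.add (continuous_id.smul continuous_const)
        have hU : interior {q : NDAux.P2 | ∃ p ∈ S, ∃ p' ∈ S, q = p - p'}
            ∈ nhds ((fun r : ℝ => w₀ + r • (w - w₀)) 0) := by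
          apply isOpen_interior.mem_nhds
          simpa using hw₀
        filter_upwards [hcont.preimage_mem_nhds hU] with r hr
        exact hDU _ hr
      have hEq := hφan.eqOn_zero_of_preconnected_of_eventuallyEq_zero
        isPreconnected_univ (Set.mem_univ (0:ℝ)) hev
      have h1 := hEq (Set.mem_univ (1:ℝ))
      simpa [hφdef] using h1
    have hWall : ∀ w, NDAux.EE μ w ∈ W := fun w => (hDzero_iff w).mp (hDall w)
    -- decay: many independent characters along the line
    set ε : ℝ := t₀ / (m + 1) with hεdef
    have hεpos : 0 < ε := div_pos ht₀ (by positivity)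
    have hsmall : ∀ᶠ r in cocompact ℝ, ‖NDAux.FT μ (r • v)‖ < ε := by
      have h3 := Metric.tendsto_nhds.mp hFTdec ε hεpos
      filter_upwards [h3] with r hr
      simpa [dist_zero_right] using hr
    obtain ⟨Kc, hKc, hKcsub⟩ := Filter.mem_cocompact.mp hsmall
    obtain ⟨CK, hCK⟩ := hKc.isBounded.exists_norm_le
    set R : ℝ := max CK 0 + 1 with hRdef
    have hRpos : 0 < R := by positivity
    have hfar : ∀ r : ℝ, R ≤ |r| → ‖NDAux.FT μ (r • v)‖ < ε := by
      intro r hr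
      apply hKcsub
      intro hmem
      have h4 := hCK r hmem
      rw [Real.norm_eq_abs] at h4
      have h5 : CK ≤ max CK 0 := le_max_left _ _
      linarith
    set rr : Fin (m+1) → ℝ := fun a2 => ((a2 : ℕ) + 1) * R with hrrdef
    have hrrdiff : ∀ a2 b2 : Fin (m+1), a2 ≠ b2 → R ≤ |rr a2 - rr b2| := by
      intro a2 b2 hne
      have heq5 : rr a2 - rr b2 = (((a2:ℕ):ℝ) - ((b2:ℕ):ℝ)) * R := by
        rw [hrrdef]; push_cast; ring
      rw [heq5, abs_mul, abs_of_pos hRpos]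
      have hne2 : ((a2:ℕ):ℤ) ≠ ((b2:ℕ):ℤ) := by
        simpa using fun h => hne (Fin.ext h)
      have h1 : (1:ℝ) ≤ |((a2:ℕ):ℝ) - ((b2:ℕ):ℝ)| := by
        have h6 : (1:ℤ) ≤ |((a2:ℕ):ℤ) - ((b2:ℕ):ℤ)| := Int.one_le_abs (sub_ne_zero.mpr hne2)
        have h7 : ((|((a2:ℕ):ℤ) - ((b2:ℕ):ℤ)| : ℤ) : ℝ) = |((a2:ℕ):ℝ) - ((b2:ℕ):ℝ)| := by
          push_cast [Int.cast_abs]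
          norm_num
        calc (1:ℝ) ≤ ((|((a2:ℕ):ℤ) - ((b2:ℕ):ℤ)| : ℤ) : ℝ) := by exact_mod_cast h6
          _ = _ := h7
      nlinarith
    have hLIline : LinearIndependent ℂ (fun a2 : Fin (m+1) => NDAux.EE μ (rr a2 • v)) := by
      rw [Fintype.linearIndependent_iff]
      intro x hx
      have hinner : ∀ b2 : Fin (m+1),
          ∑ a2, x a2 * NDAux.FT μ ((rr a2 - rr b2) • v) = 0 := by
        intro b2
        have h0 : (inner ℂ (NDAux.EE μ (rr b2 • v))
            (∑ a2, x a2 • NDAux.EE μ (rr a2 • v)) : ℂ) = 0 := by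
          rw [hx, inner_zero_right]
        rw [inner_sum] at h0
        rw [← h0]
        refine Finset.sum_congr rfl fun a2 _ => ?_
        rw [inner_smul_right, NDAux.inner_EE, ← sub_smul]
      obtain ⟨b2, -, hb2max⟩ := Finset.exists_max_image Finset.univ
        (fun a2 => ‖x a2‖) ⟨0, Finset.mem_univ 0⟩
      have hb2max' : ∀ a2, ‖x a2‖ ≤ ‖x b2‖ :=
        fun a2 => hb2max a2 (Finset.mem_univ a2)
      have hkey : ‖x b2‖ * t₀ ≤ m * (‖x b2‖ * ε) := by
        have h1 := hinner b2
        rw [← Finset.add_sum_erase _ _ (Finset.mem_univ b2)] at h1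
        have h2 : x b2 * NDAux.FT μ ((rr b2 - rr b2) • v)
            = - ∑ a2 ∈ Finset.univ.erase b2, x a2 * NDAux.FT μ ((rr a2 - rr b2) • v) :=
          eq_neg_of_add_eq_zero_left h1
        have h3 : ‖x b2‖ * t₀
            = ‖x b2 * NDAux.FT μ ((rr b2 - rr b2) • v)‖ := by
          rw [sub_self, zero_smul, hFT0, norm_mul, Complex.norm_of_nonneg ht₀.le]
        rw [h3, h2, norm_neg]
        calc ‖∑ a2 ∈ Finset.univ.erase b2,
              x a2 * NDAux.FT μ ((rr a2 - rr b2) • v)‖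
            ≤ ∑ a2 ∈ Finset.univ.erase b2,
              ‖x a2 * NDAux.FT μ ((rr a2 - rr b2) • v)‖ :=
              norm_sum_le _ _
          _ ≤ ∑ a2 ∈ Finset.univ.erase b2, ‖x b2‖ * ε := by
              refine Finset.sum_le_sum fun a2 ha2 => ?_
              rw [norm_mul]
              have hne : a2 ≠ b2 := Finset.ne_of_mem_erase ha2
              have h8 : ‖NDAux.FT μ ((rr a2 - rr b2) • v)‖ ≤ ε := by
                have := hfar (rr a2 - rr b2) (hrrdiff a2 b2 hne)
                exact le_of_lt this
              exact mul_le_mul (hb2max' a2) h8 (norm_nonneg _)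
                (norm_nonneg _)
          _ = m * (‖x b2‖ * ε) := by
              rw [Finset.sum_const, Finset.card_erase_of_mem (Finset.mem_univ b2)]
              simp [Finset.card_univ, nsmul_eq_mul]
      have hεt : ε * (m + 1) = t₀ := by
        rw [hεdef]
        field_simp
      have hxb2 : ‖x b2‖ = 0 := by
        by_contra h
        have hpos : 0 < ‖x b2‖ :=
          lt_of_le_of_ne (norm_nonneg _) (Ne.symm h)
        nlinarith
      intro i
      have h9 : ‖x i‖ = 0 :=
        le_antisymm (hxb2 ▸ hb2max' i) (norm_nonneg _)
      exact norm_eq_zero.mp h9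
    have hfd : FiniteDimensional ℂ W := by
      rw [hWdef]
      exact FiniteDimensional.span_of_finite ℂ (Set.finite_range _)
    have hfr : Module.finrank ℂ W ≤ m := by
      rw [hWdef]
      haveI : Fintype (Set.range fun a2 => NDAux.EE μ (QQ a2)) :=
        (Set.finite_range _).fintype
      refine le_trans (finrank_span_le_card (R := ℂ) _) ?_
      rw [Set.toFinset_range]
      exact le_trans Finset.card_image_le (by simp)
    set yy : Fin (m+1) → W := fun a2 => ⟨NDAux.EE μ (rr a2 • v), hWall _⟩ with hyydef
    have hyyli : LinearIndependent ℂ yy := by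
      apply LinearIndependent.of_comp W.subtype
      exact hLIline
    have hcard := hyyli.fintype_card_le_finrank
    rw [Fintype.card_fin] at hcard
    omega
  -- conclude positive definiteness
  obtain ⟨p, hpS, hli⟩ := main
  set cC : ℂ := 1 / (2 * (π : ℂ)) with hcCdef
  have hcCre : cC = ((1 / (2 * π) : ℝ) : ℂ) := by
    rw [hcCdef]; push_cast; ring
  have hcCconj : (starRingEnd ℂ) cC = cC := by
    rw [hcCre, Complex.conj_ofReal]
  have hAentry : ∀ j k, (-(Matrix.of fun j k => hatν (p j - p k))) j k
      = cC * (inner ℂ (NDAux.EE μ (p k)) (NDAux.EE μ (p j)) : ℂ) := by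
    intro j k
    simp only [Matrix.neg_apply, Matrix.of_apply]
    rw [hhat' (p j - p k), neg_neg, NDAux.inner_EE]
  refine ⟨p, hpS, Matrix.posDef_iff_dotProduct_mulVec.mpr ⟨?herm, ?pos⟩⟩
  case herm =>
    unfold Matrix.IsHermitian
    ext j k
    rw [Matrix.conjTranspose_apply, hAentry k j, hAentry j k, RCLike.star_def, map_mul,
      hcCconj, inner_conj_symm]
  case pos =>
    intro x hx
    set y : Lp ℂ 2 μ := ∑ k, (starRingEnd ℂ) (x k) • NDAux.EE μ (p k) with hydef
    have hyne : y ≠ 0 := by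
      intro h0
      apply hx
      funext k
      have hk := Fintype.linearIndependent_iff.mp hli (fun k => (starRingEnd ℂ) (x k))
        (hydef.symm.trans h0) k
      simpa using congrArg (starRingEnd ℂ) hk
    have hdot : dotProduct (star x)
        ((-(Matrix.of fun j k => hatν (p j - p k))).mulVec x) = cC * (inner ℂ y y : ℂ) := by
      rw [hydef, NDAux.dot_gram]
      simp only [dotProduct, Matrix.mulVec, Pi.star_apply, RCLike.star_def, hAentry]
      rw [Finset.mul_sum]
      refine Finset.sum_congr rfl fun j _ => ?_
      rw [Finset.mul_sum, Finset.mul_sum]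
      refine Finset.sum_congr rfl fun k _ => ?_
      ring
    rw [hdot]
    have hnorm : (inner ℂ y y : ℂ) = ((‖y‖ : ℂ))^2 := inner_self_eq_norm_sq_to_K y
    rw [hnorm, hcCre]
    have hval : ((1 / (2 * π) : ℝ) : ℂ) * ((‖y‖ : ℂ))^2
        = (((1 / (2 * π)) * ‖y‖^2 : ℝ) : ℂ) := by push_cast; ring
    rw [hval, Complex.zero_lt_real]
    have hy0 : 0 < ‖y‖ := norm_pos_iff.mpr hyne
    have hπ : 0 < π := Real.pi_pos
    positivity
end
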